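/- Let (S^ρ)_{ρ∈(0,1)} be a C¹-regularized single layer kernel and let F : Ω → ℝ be continuous. Then lim_{ρ→0+} sup_{ξ∈Ω} |∫_Ω S^ρ(ξ·η)F(η) dω(η) − ∫_Ω S(ξ·η)F(η) dω(η)| = 0. -/

import Mathlib

open MeasureTheory Filter Real Set RealInnerProductSpace

noncomputable section

abbrev E3 : Type := EuclideanSpace ℝ (Fin 3)

/-- Legendre polynomial of degree `n` (Rodrigues' formula, normalized by `legendreP n 1 = 1`). -/
noncomputable def legendreP (n : ℕ) (t : ℝ) : ℝ :=
  (1 / (2 ^ n * n.factorial)) * iteratedDeriv n (fun x : ℝ => (x ^ 2 - 1) ^ n) t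

/-- The unit sphere Ω ⊂ ℝ³. -/
def sph : Set E3 := Metric.sphere 0 1

/-- The standard surface measure dω on the unit sphere (total mass 4π), as a measure on ℝ³. -/
noncomputable def σS : Measure E3 :=
  Measure.map Subtype.val ((volume : Measure E3).toSphere)

/-- Normalization x ↦ x/|x|. -/
noncomputable def nrm (x : E3) : E3 := ‖x‖⁻¹ • x

/-- 0-homogeneous extension F̄ of a scalar field on the sphere. -/
noncomputable def homog (F : E3 → ℝ) : E3 → ℝ := fun x => F (nrm x)

/-- 0-homogeneous extension f̄ of a vector field on the sphere. -/
noncomputable def homogV (f : E3 → E3) : E3 → E3 := fun x => f (nrm x)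

/-- `F` is of class C^k(Ω): its 0-homogeneous extension is k-times continuously
differentiable on ℝ³ ∖ {0}. -/
def IsCk (k : ℕ∞) (F : E3 → ℝ) : Prop := ContDiffOn ℝ k (homog F) {x : E3 | x ≠ 0}

/-- `f` is of class c^k(Ω) (componentwise C^k(Ω)). -/
def IsCkV (k : ℕ∞) (f : E3 → E3) : Prop := ContDiffOn ℝ k (homogV f) {x : E3 | x ≠ 0}

/-- Surface gradient ∇*F(ξ) = ∇F̄(ξ). -/
noncomputable def surfGrad (F : E3 → ℝ) (ξ : E3) : E3 := gradient (homog F) ξ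

/-- Cross product on ℝ³. -/
noncomputable def cross3 (x y : E3) : E3 :=
  (WithLp.equiv 2 (Fin 3 → ℝ)).symm
    ![x 1 * y 2 - x 2 * y 1, x 2 * y 0 - x 0 * y 2, x 0 * y 1 - x 1 * y 0]

/-- Surface curl gradient L*F(ξ) = ξ × ∇F̄(ξ). -/
noncomputable def surfCurl (F : E3 → ℝ) (ξ : E3) : E3 := cross3 ξ (surfGrad F ξ)

/-- Euclidean Laplacian (sum of second partial derivatives). -/
noncomputable def lap (f : E3 → ℝ) (x : E3) : ℝ :=
  ∑ i : Fin 3,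
    fderiv ℝ (fun y => fderiv ℝ f y (EuclideanSpace.single i 1)) x (EuclideanSpace.single i 1)

/-- Beltrami operator Δ*F(ξ) = ΔF̄(ξ). -/
noncomputable def beltrami (F : E3 → ℝ) (ξ : E3) : ℝ := lap (homog F) ξ

/-- Green's function for the Beltrami operator, as a zonal kernel. -/
noncomputable def GreenG (t : ℝ) : ℝ :=
  (1 / (4 * π)) * Real.log (1 - t) + (1 / (4 * π)) * (1 - Real.log 2)

/-- The single layer kernel S. -/
noncomputable def singleS (t : ℝ) : ℝ := 1 / (Real.sqrt 2 * Real.sqrt (1 - t))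

/-- Closed form of the single layer operator applied to Green's function, D⁻¹G(Δ*;·). -/
noncomputable def gDG (t : ℝ) : ℝ :=
  (1 / (2 * π)) * Real.log ((1 + t) * (1 / 2 - 1 / (1 - 2 * singleS t))) - 1 / (2 * π)

/-- A C¹-regularized single layer kernel: non-negative regularization functions `R ρ`,
ρ ∈ (0,1), of class C¹ on [−1,1], matching `singleS` up to first order at 1−ρ, with
lim_{ρ→0+} ∫_{1−ρ}^1 |R^ρ| dt = 0 and lim_{ρ→0+} ρ·∫_{1−ρ}^1 |(R^ρ)'| dt = 0. -/
structure RegSingleC1 where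
  R : ℝ → ℝ → ℝ
  nonneg : ∀ ρ ∈ Set.Ioo (0 : ℝ) 1, ∀ t ∈ Set.Icc (-1 : ℝ) 1, 0 ≤ R ρ t
  smooth : ∀ ρ ∈ Set.Ioo (0 : ℝ) 1, ContDiffOn ℝ 1 (R ρ) (Set.Icc (-1) 1)
  match0 : ∀ ρ ∈ Set.Ioo (0 : ℝ) 1, R ρ (1 - ρ) = singleS (1 - ρ)
  match1 : ∀ ρ ∈ Set.Ioo (0 : ℝ) 1, deriv (R ρ) (1 - ρ) = deriv singleS (1 - ρ)
  lim0 : Filter.Tendsto (fun ρ => ∫ t in (1 - ρ)..1, |R ρ t|)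
    (nhdsWithin 0 (Set.Ioi 0)) (nhds 0)
  lim1 : Filter.Tendsto (fun ρ => ρ * ∫ t in (1 - ρ)..1, |deriv (R ρ) t|)
    (nhdsWithin 0 (Set.Ioi 0)) (nhds 0)

/-- The regularized single layer kernel S^ρ. -/
noncomputable def SregK (Rs : RegSingleC1) (ρ : ℝ) (t : ℝ) : ℝ :=
  if t ≤ 1 - ρ then singleS t else Rs.R ρ t


open scoped ENNReal Pointwise

lemma measurable_singleS : Measurable singleS := by
  unfold singleS
  exact measurable_const.div ((continuous_const.mul
    (Real.continuous_sqrt.comp (continuous_const.sub continuous_id))).measurable)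

lemma singleS_nonneg (t : ℝ) : 0 ≤ singleS t := by
  unfold singleS; positivity

lemma singleS_le_one {t : ℝ} (ht : t ≤ 1/2) : singleS t ≤ 1 := by
  unfold singleS
  rw [div_le_one_iff]
  left
  have h2 : Real.sqrt (1/2) ≤ Real.sqrt (1 - t) := Real.sqrt_le_sqrt (by linarith)
  have h3 : (0:ℝ) < Real.sqrt (1/2) := Real.sqrt_pos.mpr (by norm_num)
  constructor
  · nlinarith [Real.sqrt_pos.mpr (show (0:ℝ) < 2 by norm_num)]
  · calc (1:ℝ) = Real.sqrt 2 * Real.sqrt (1/2) := by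
          rw [← Real.sqrt_mul (by norm_num : (0:ℝ) ≤ 2)]; norm_num
      _ ≤ _ := by
          have := Real.sqrt_nonneg 2
          nlinarith


lemma singleS_eq_rpow {t : ℝ} (ht : t ≤ 1) :
    singleS t = (Real.sqrt 2)⁻¹ * (1 - t) ^ (-(1/2) : ℝ) := by
  have h1 : (0:ℝ) ≤ 1 - t := by linarith
  rw [singleS, Real.rpow_neg h1, ← Real.sqrt_eq_rpow (1-t), one_div, mul_inv]


lemma singleS_integrableOn {δ : ℝ} (h0 : 0 ≤ δ) :
    IntegrableOn singleS (Set.Ioc (1-δ) 1) := by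
  have hii : IntervalIntegrable (fun u : ℝ => (Real.sqrt 2)⁻¹ * u ^ (-(1/2):ℝ)) volume 0 δ :=
    (intervalIntegral.intervalIntegrable_rpow' (by norm_num)).const_mul _
  have h2 := (hii.comp_sub_left 1).symm
  simp only [sub_zero] at h2
  rw [intervalIntegrable_iff_integrableOn_Ioc_of_le (by linarith)] at h2
  exact h2.congr_fun (fun t ht => (singleS_eq_rpow ht.2).symm) measurableSet_Ioc

lemma singleS_intervalIntegral {δ : ℝ} (h0 : 0 ≤ δ) :
    ∫ t in Set.Ioc (1-δ) 1, singleS t = Real.sqrt 2 * Real.sqrt δ := by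
  rw [← intervalIntegral.integral_of_le (by linarith : 1-δ ≤ 1)]
  rw [intervalIntegral.integral_congr (g := fun t => (Real.sqrt 2)⁻¹ * (1-t) ^ (-(1/2) : ℝ))
    (fun t ht => by
      rw [Set.uIcc_of_le (by linarith : 1-δ ≤ 1)] at ht
      exact singleS_eq_rpow ht.2)]
  rw [intervalIntegral.integral_comp_sub_left (fun u => (Real.sqrt 2)⁻¹ * u ^ (-(1/2):ℝ)) 1]
  simp only [sub_self, sub_sub_cancel]
  rw [intervalIntegral.integral_const_mul, integral_rpow (Or.inl (by norm_num))]
  rw [Real.zero_rpow (by norm_num)]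
  have : δ ^ ((-(1/2):ℝ) + 1) = Real.sqrt δ := by
    norm_num
    rw [Real.sqrt_eq_rpow]
  rw [this]
  have h2 : Real.sqrt 2 * Real.sqrt 2 = 2 := Real.mul_self_sqrt (by norm_num)
  have h3 : (0:ℝ) < Real.sqrt 2 := Real.sqrt_pos.mpr (by norm_num)
  field_simp
  nlinarith [Real.sqrt_nonneg δ]

lemma singleS_lint {δ : ℝ} (h0 : 0 ≤ δ) :
    ∫⁻ t in Set.Ioc (1-δ) 1, ENNReal.ofReal (singleS t)
      = ENNReal.ofReal (Real.sqrt 2 * Real.sqrt δ) := by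
  rw [← ofReal_integral_eq_lintegral_ofReal (singleS_integrableOn h0)
    (Filter.Eventually.of_forall fun t => singleS_nonneg t), singleS_intervalIntegral h0]

lemma disk_vol (Rr : ℝ) (hR : 0 ≤ Rr) :
    (volume : Measure (Fin 2 → ℝ)) {w | w 0 ^ 2 + w 1 ^ 2 < Rr} = ENNReal.ofReal (π * Rr) := by
  have hmp := EuclideanSpace.volume_preserving_symm_measurableEquiv_toLp (Fin 2)
  have hset : (MeasurableEquiv.toLp 2 (Fin 2 → ℝ)).symm ⁻¹' {w | w 0 ^ 2 + w 1 ^ 2 < Rr}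
      = Metric.ball (0 : EuclideanSpace ℝ (Fin 2)) (Real.sqrt Rr) := by
    ext x
    simp only [Set.mem_preimage, Metric.mem_ball, dist_zero_right, EuclideanSpace.norm_eq,
      Set.mem_setOf_eq, Real.norm_eq_abs, sq_abs, Fin.sum_univ_two]
    have hx : (MeasurableEquiv.toLp 2 (Fin 2 → ℝ)).symm x = (WithLp.equiv 2 _) x := rfl
    rw [hx]
    have h0 : (0:ℝ) ≤ x 0 ^ 2 + x 1 ^ 2 := by positivity
    rw [show √(x 0 ^ 2 + x 1 ^ 2) < √Rr ↔ x 0 ^ 2 + x 1 ^ 2 < Rr from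
      Real.sqrt_lt_sqrt_iff h0]
    rfl
  have hms : MeasurableSet {w : Fin 2 → ℝ | w 0 ^ 2 + w 1 ^ 2 < Rr} := by
    apply measurableSet_lt
    · exact ((continuous_apply 0).pow 2).add ((continuous_apply 1).pow 2) |>.measurable
    · exact measurable_const
  rw [← hmp.measure_preimage hms.nullMeasurableSet, hset, EuclideanSpace.volume_ball]
  simp only [Fintype.card_fin]
  have h1 : ((2:ℕ):ℝ)/2 + 1 = 2 := by norm_num
  rw [h1, Real.Gamma_two, Real.sq_sqrt Real.pi_pos.le, ← ENNReal.ofReal_pow (Real.sqrt_nonneg _),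
    Real.sq_sqrt hR, ← ENNReal.ofReal_mul hR]
  rw [div_one, mul_comm]


lemma cone_slice_vol {a : ℝ} (ha : a ∈ Set.Ico (1/2 : ℝ) 1) :
    (volume : Measure (Fin 3 → ℝ))
      {y | y 0 ^ 2 + y 1 ^ 2 + y 2 ^ 2 < 1 ∧
        a * Real.sqrt (y 0 ^ 2 + y 1 ^ 2 + y 2 ^ 2) < y 0}
      = ENNReal.ofReal (2 * π / 3 * (1 - a)) := by
  have ha0 : (0:ℝ) < a := lt_of_lt_of_le (by norm_num) ha.1
  have ha1 : a < 1 := ha.2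
  set c : ℝ := (1 - a^2)/a^2 with hc
  have hca : c * a^2 = 1 - a^2 := by rw [hc]; field_simp
  have hc0 : 0 ≤ c := by
    apply div_nonneg _ (by positivity); nlinarith
  set S2 : Set (ℝ × (Fin 2 → ℝ)) :=
    {p | p.1 ^ 2 + p.2 0 ^ 2 + p.2 1 ^ 2 < 1 ∧
         a * Real.sqrt (p.1 ^ 2 + p.2 0 ^ 2 + p.2 1 ^ 2) < p.1} with hS2
  have hcont1 : Continuous fun p : ℝ × (Fin 2 → ℝ) => p.1 ^ 2 + p.2 0 ^ 2 + p.2 1 ^ 2 :=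
by fun_prop
  have hS2m : MeasurableSet S2 := by
    apply MeasurableSet.inter
    · exact measurableSet_lt hcont1.measurable measurable_const
    · exact measurableSet_lt ((continuous_const.mul
        (Real.continuous_sqrt.comp hcont1)).measurable) continuous_fst.measurable
  have hpre : (MeasurableEquiv.piFinSuccAbove (fun _ : Fin 3 => ℝ) 0) ⁻¹' S2
      = {y : Fin 3 → ℝ | y 0 ^ 2 + y 1 ^ 2 + y 2 ^ 2 < 1 ∧
          a * Real.sqrt (y 0 ^ 2 + y 1 ^ 2 + y 2 ^ 2) < y 0} := by
    ext y
    simp only [Set.mem_preimage, MeasurableEquiv.piFinSuccAbove_apply, hS2, Set.mem_setOf_eq,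
      Fin.insertNthEquiv, Equiv.coe_fn_symm_mk]
    have e1 : Fin.removeNth 0 y 0 = y 1 := rfl
    have e2 : Fin.removeNth 0 y 1 = y 2 := rfl
    rw [e1, e2]
  rw [← hpre]
  have hmp := measurePreserving_piFinSuccAbove (fun _ : Fin 3 => (volume : Measure ℝ)) 0
  rw [volume_pi, hmp.measure_preimage hS2m.nullMeasurableSet, ← volume_pi,
    Measure.prod_apply hS2m]
  have hslice : ∀ z : ℝ, (volume : Measure (Fin 2 → ℝ)) (Prod.mk z ⁻¹' S2)
      = Set.indicator (Set.Ioo (0:ℝ) 1)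
          (fun z => ENNReal.ofReal (π * min (1 - z^2) (c * z^2))) z := by
    intro z
    by_cases hz : z ∈ Set.Ioo (0:ℝ) 1
    · rw [Set.indicator_of_mem hz]
      obtain ⟨hz0, hz1⟩ := hz
      have hsl : Prod.mk z ⁻¹' S2
          = {w : Fin 2 → ℝ | w 0 ^ 2 + w 1 ^ 2 < min (1 - z^2) (c * z^2)} := by
        ext w
        simp only [hS2, Set.mem_preimage, Set.mem_setOf_eq, lt_min_iff]
        set s := w 0 ^ 2 + w 1 ^ 2 with hs
        have hs0 : 0 ≤ s := by positivity
        have hsq := Real.sq_sqrt (show (0:ℝ) ≤ z^2 + w 0 ^ 2 + w 1 ^ 2 by positivity)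
        constructor
        · rintro ⟨h1, h2⟩
          refine ⟨by linarith, ?_⟩
          have h3 : (a * Real.sqrt (z ^ 2 + w 0 ^ 2 + w 1 ^ 2))^2 < z^2 :=
            pow_lt_pow_left₀ h2 (by positivity) (by norm_num)
          rw [mul_pow, hsq] at h3
          have h4 : a^2 * s < a^2 * (c * z^2) := by nlinarith
          exact lt_of_mul_lt_mul_left h4 (by positivity)
        · rintro ⟨h1, h2⟩
          refine ⟨by linarith, ?_⟩
          have h3 : (a * Real.sqrt (z ^ 2 + w 0 ^ 2 + w 1 ^ 2))^2 < z^2 := by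
            rw [mul_pow, hsq]; nlinarith
          have h5 : a * Real.sqrt (z ^ 2 + w 0 ^ 2 + w 1 ^ 2)
              = Real.sqrt ((a * Real.sqrt (z ^ 2 + w 0 ^ 2 + w 1 ^ 2))^2) :=
            (Real.sqrt_sq (by positivity)).symm
          rw [h5]
          calc Real.sqrt ((a * Real.sqrt (z ^ 2 + w 0 ^ 2 + w 1 ^ 2))^2)
              < Real.sqrt (z^2) := Real.sqrt_lt_sqrt (by positivity) h3
            _ = z := Real.sqrt_sq hz0.le
      rw [hsl]
      exact disk_vol _ (le_min (by nlinarith) (by positivity))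
    · rw [Set.indicator_of_notMem hz]
      have : Prod.mk z ⁻¹' S2 = (∅ : Set (Fin 2 → ℝ)) := by
        ext w
        simp only [hS2, Set.mem_preimage, Set.mem_setOf_eq, Set.mem_empty_iff_false, iff_false]
        rintro ⟨h1, h2⟩
        rw [Set.mem_Ioo, not_and_or] at hz
        rcases hz with hz | hz
        · push_neg at hz
          have : 0 ≤ a * Real.sqrt (z ^ 2 + w 0 ^ 2 + w 1 ^ 2) := by positivity
          linarith
        · push_neg at hz
          nlinarith
      rw [this, measure_empty]
  rw [lintegral_congr hslice, lintegral_indicator measurableSet_Ioo]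
  have hcont2 : Continuous fun z : ℝ => π * min (1 - z^2) (c * z^2) :=
    continuous_const.mul (((continuous_const.sub (continuous_id.pow 2)).min
      (continuous_const.mul (continuous_id.pow 2))))
  have hint : IntegrableOn (fun z : ℝ => π * min (1 - z^2) (c * z^2)) (Set.Ioo 0 1) :=
    (hcont2.integrableOn_Icc (a := 0) (b := 1)).mono_set Set.Ioo_subset_Icc_self
  have hnn : 0 ≤ᵐ[volume.restrict (Set.Ioo (0:ℝ) 1)]
      fun z : ℝ => π * min (1 - z^2) (c * z^2) := by
    refine (ae_restrict_iff' measurableSet_Ioo).mpr (Filter.Eventually.of_forall fun z hz => ?_)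
    obtain ⟨hz0, hz1⟩ := hz
    have : 0 ≤ min (1 - z^2) (c * z^2) := le_min (by nlinarith) (by positivity)
    positivity
  rw [← ofReal_integral_eq_lintegral_ofReal hint hnn]
  congr 1
  have hIoo : ∫ z in Set.Ioo (0:ℝ) 1, π * min (1 - z^2) (c * z^2)
      = ∫ z in (0:ℝ)..1, π * min (1 - z^2) (c * z^2) := by
    rw [intervalIntegral.integral_of_le zero_le_one, integral_Ioc_eq_integral_Ioo]
  rw [hIoo, ← intervalIntegral.integral_add_adjacent_intervals (a := 0) (b := a) (c := 1)
    (hcont2.intervalIntegrable 0 a) (hcont2.intervalIntegrable a 1)]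
  have hI1 : ∫ z in (0:ℝ)..a, π * min (1 - z^2) (c * z^2) = π * c * (a^3/3) := by
    rw [intervalIntegral.integral_congr (g := fun z => (π * c) * z^2) (fun z hz => by
      rw [Set.uIcc_of_le ha0.le] at hz
      obtain ⟨hz0, hza⟩ := hz
      have hz2 : z^2 ≤ a^2 := by nlinarith
      have hcz : c * z^2 ≤ c * a^2 := by nlinarith [mul_le_mul_of_nonneg_left hz2 hc0]
      have : min (1 - z^2) (c * z^2) = c * z^2 := min_eq_right (by nlinarith)
      rw [this]; ring)]
    rw [intervalIntegral.integral_const_mul, integral_pow]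
    norm_num
  have hI2 : ∫ z in a..(1:ℝ), π * min (1 - z^2) (c * z^2) = π * ((1 - a) - (1 - a^3)/3) := by
    rw [intervalIntegral.integral_congr (g := fun z => π - π * z^2) (fun z hz => by
      rw [Set.uIcc_of_le ha1.le] at hz
      obtain ⟨hza, hz1⟩ := hz
      have hz2 : a^2 ≤ z^2 := by nlinarith
      have hcz : c * a^2 ≤ c * z^2 := by nlinarith [mul_le_mul_of_nonneg_left hz2 hc0]
      have : min (1 - z^2) (c * z^2) = 1 - z^2 := min_eq_left (by nlinarith)
      rw [this]; ring)]
    have hsub : (∫ z in a..(1:ℝ), π - π * z ^ 2)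
        = (∫ z in a..(1:ℝ), π) - ∫ z in a..(1:ℝ), π * z ^ 2 :=
      intervalIntegral.integral_sub intervalIntegrable_const
        (by apply Continuous.intervalIntegrable; fun_prop)
    rw [hsub, intervalIntegral.integral_const, intervalIntegral.integral_const_mul, integral_pow,
      smul_eq_mul]
    push_cast
    ring
  rw [hI1, hI2, hc]
  field_simp
  ring


lemma inner_cont (ξ : E3) : Continuous fun η : E3 => (⟪ξ, η⟫ : ℝ) :=
  continuous_const.inner continuous_id

lemma cap_vol {ξ : E3} (hξ : ‖ξ‖ = 1) {a : ℝ} (ha : a ∈ Set.Ico (1/2:ℝ) 1) :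
    σS {η : E3 | a < ⟪ξ, η⟫} = ENNReal.ofReal (2 * π * (1 - a)) := by
  have ha0 : (0:ℝ) < a := lt_of_lt_of_le (by norm_num) ha.1
  have hA : MeasurableSet {η : E3 | a < ⟪ξ, η⟫} :=
    measurableSet_lt measurable_const (inner_cont ξ).measurable
  rw [σS, Measure.map_apply measurable_subtype_coe hA,
    Measure.toSphere_apply' _ (measurable_subtype_coe hA),
    Subtype.image_preimage_coe]
  have hcone : Set.Ioo (0:ℝ) 1 • ((Metric.sphere (0:E3) 1 : Set E3) ∩ {η : E3 | a < ⟪ξ, η⟫})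
      = {x : E3 | ‖x‖ < 1 ∧ a * ‖x‖ < ⟪ξ, x⟫} := by
    ext x
    rw [Set.mem_smul]
    constructor
    · rintro ⟨r, hr, y, ⟨hy1, hy2⟩, rfl⟩
      rw [mem_sphere_zero_iff_norm] at hy1
      rw [Set.mem_setOf_eq] at hy2
      obtain ⟨hr0, hr1⟩ := hr
      have hn : ‖r • y‖ = r := by
        rw [norm_smul, hy1, Real.norm_eq_abs, abs_of_pos hr0, mul_one]
      refine ⟨by rw [hn]; exact hr1, ?_⟩
      rw [hn, real_inner_smul_right, mul_comm]
      exact mul_lt_mul_of_pos_left hy2 hr0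
    · rintro ⟨h1, h2⟩
      have hx0 : x ≠ 0 := by
        rintro rfl
        rw [inner_zero_right, norm_zero, mul_zero] at h2
        exact lt_irrefl 0 h2
      have hnx : 0 < ‖x‖ := norm_pos_iff.mpr hx0
      refine ⟨‖x‖, ⟨hnx, h1⟩, ‖x‖⁻¹ • x, ⟨?_, ?_⟩, ?_⟩
      · rw [mem_sphere_zero_iff_norm, norm_smul, Real.norm_eq_abs,
          abs_of_pos (inv_pos.mpr hnx), inv_mul_cancel₀ hnx.ne']
      · rw [Set.mem_setOf_eq, real_inner_smul_right]
        have h3 := mul_lt_mul_of_pos_left h2 (inv_pos.mpr hnx)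
        rwa [← mul_assoc, mul_comm ‖x‖⁻¹ a, mul_assoc, inv_mul_cancel₀ hnx.ne', mul_one] at h3
      · rw [smul_smul, mul_inv_cancel₀ hnx.ne', one_smul]
  rw [hcone]
  -- rotation
  have horth : Orthonormal ℝ (({0} : Set (Fin 3)).restrict fun _ => ξ) := by
    refine ⟨fun _ => hξ, fun i j hij => (hij (Subtype.ext (i.2.trans j.2.symm))).elim⟩
  obtain ⟨b, hb⟩ := horth.exists_orthonormalBasis_extension_of_card_eq (by simp)
  set T := b.repr.symm with hT
  have hTmp := T.measurePreserving
  have hC : MeasurableSet {x : E3 | ‖x‖ < 1 ∧ a * ‖x‖ < ⟪ξ, x⟫} := by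
    apply MeasurableSet.inter
    · exact measurableSet_lt continuous_norm.measurable measurable_const
    · exact measurableSet_lt (continuous_const.mul continuous_norm).measurable
        (inner_cont ξ).measurable
  rw [← hTmp.measure_preimage hC.nullMeasurableSet]
  have hTpre : ⇑T ⁻¹' {x : E3 | ‖x‖ < 1 ∧ a * ‖x‖ < ⟪ξ, x⟫}
      = {y : EuclideanSpace ℝ (Fin 3) | ‖y‖ < 1 ∧ a * ‖y‖ < y 0} := by
    ext y
    simp only [Set.mem_preimage, Set.mem_setOf_eq, LinearIsometryEquiv.norm_map]
    have hxi : ξ = T (EuclideanSpace.single 0 1) := by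
      rw [hT, OrthonormalBasis.repr_symm_single, ← hb 0 (Set.mem_singleton 0)]
    have hin : (⟪ξ, T y⟫ : ℝ) = y 0 := by
      rw [hxi, LinearIsometryEquiv.inner_map_map, EuclideanSpace.inner_single_left]
      simp
    rw [hin]
  rw [hTpre]
  have hmp3 := EuclideanSpace.volume_preserving_symm_measurableEquiv_toLp (Fin 3)
  have hD : MeasurableSet {y : EuclideanSpace ℝ (Fin 3) | ‖y‖ < 1 ∧ a * ‖y‖ < y 0} := by
    apply MeasurableSet.inter
    · exact measurableSet_lt continuous_norm.measurable measurable_const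
    · exact measurableSet_lt (continuous_const.mul continuous_norm).measurable
        (EuclideanSpace.proj (0 : Fin 3) : EuclideanSpace ℝ (Fin 3) →L[ℝ] ℝ).continuous.measurable
  rw [← (hmp3.symm _).measure_preimage hD.nullMeasurableSet]
  have hpre2 : ⇑(MeasurableEquiv.toLp 2 (Fin 3 → ℝ)).symm.symm ⁻¹'
        {y : EuclideanSpace ℝ (Fin 3) | ‖y‖ < 1 ∧ a * ‖y‖ < y 0}
      = {y : Fin 3 → ℝ | y 0 ^ 2 + y 1 ^ 2 + y 2 ^ 2 < 1 ∧
          a * Real.sqrt (y 0 ^ 2 + y 1 ^ 2 + y 2 ^ 2) < y 0} := by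
    ext y
    have happ : ∀ i, ((MeasurableEquiv.toLp 2 (Fin 3 → ℝ)).symm.symm y) i = y i := fun i => rfl
    simp only [Set.mem_preimage, Set.mem_setOf_eq, EuclideanSpace.norm_eq, happ,
      Real.norm_eq_abs, sq_abs, Fin.sum_univ_three]
    rw [Real.sqrt_lt' one_pos, one_pow]
  rw [hpre2, cone_slice_vol ha]
  rw [finrank_euclideanSpace_fin]
  rw [show ((3:ℕ):ℝ≥0∞) = ENNReal.ofReal 3 by norm_num,
    ← ENNReal.ofReal_mul (by norm_num)]
  congr 1
  ring


instance : IsFiniteMeasure σS := by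
  constructor
  rw [σS, Measure.map_apply measurable_subtype_coe MeasurableSet.univ]
  exact measure_lt_top _ _

lemma sph_compl_null : σS (Metric.sphere (0:E3) 1)ᶜ = 0 := by
  rw [σS, Measure.map_apply measurable_subtype_coe
    (Metric.isClosed_sphere.measurableSet).compl]
  convert measure_empty
  · ext η
    simp [η.2]
  · infer_instance

lemma ae_sph : ∀ᵐ η ∂σS, η ∈ Metric.sphere (0:E3) 1 := by
  rw [Filter.eventually_iff, mem_ae_iff]
  have : {η : E3 | η ∈ Metric.sphere (0:E3) 1}ᶜ = (Metric.sphere (0:E3) 1)ᶜ := rfl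
  rw [this]
  exact sph_compl_null

lemma cap_vol' {ξ : E3} (hξ : ‖ξ‖ = 1) {x : ℝ} (hx : 1/2 ≤ x) :
    σS {η : E3 | x < ⟪ξ, η⟫} = ENNReal.ofReal (2 * π * (1 - min x 1)) := by
  rcases lt_or_ge x 1 with h | h
  · rw [min_eq_left h.le]; exact cap_vol hξ ⟨hx, h⟩
  · rw [min_eq_right h]
    simp only [sub_self, mul_zero, ENNReal.ofReal_zero]
    apply measure_mono_null _ sph_compl_null
    intro η hη
    simp only [Set.mem_setOf_eq] at hη
    simp only [Set.mem_compl_iff, mem_sphere_zero_iff_norm]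
    intro hn
    have : (⟪ξ, η⟫ : ℝ) ≤ 1 := by
      have := real_inner_le_norm ξ η
      rw [hξ, hn] at this; simpa using this
    linarith

lemma map_inner_restrict {ξ : E3} (hξ : ‖ξ‖ = 1) :
    (Measure.map (fun η : E3 => (⟪ξ, η⟫ : ℝ)) σS).restrict (Set.Ioi (1/2 : ℝ))
      = (ENNReal.ofReal (2 * π)) • (volume.restrict (Set.Ioc (1/2 : ℝ) 1)) := by
  set ν := Measure.map (fun η : E3 => (⟪ξ, η⟫ : ℝ)) σS with hν
  have hTm : Measurable fun η : E3 => (⟪ξ, η⟫ : ℝ) := (inner_cont ξ).measurable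
  have hfin : IsFiniteMeasure ν := by
    constructor; rw [hν, Measure.map_apply hTm MeasurableSet.univ]
    exact measure_lt_top σS _
  have hνIoi : ∀ x : ℝ, 1/2 ≤ x → ν (Set.Ioi x) = ENNReal.ofReal (2*π*(1 - min x 1)) := by
    intro x hx
    rw [hν, Measure.map_apply hTm measurableSet_Ioi]
    exact cap_vol' hξ hx
  refine Measure.ext_of_Ioc _ _ ?_
  intro p q hpq
  rw [Measure.restrict_apply measurableSet_Ioc, Measure.smul_apply, smul_eq_mul,
    Measure.restrict_apply measurableSet_Ioc, Set.Ioc_inter_Ioi, Set.Ioc_inter_Ioc,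
    Real.volume_Ioc]
  set x := p ⊔ (1/2 : ℝ) with hxdef
  have hx : (1/2:ℝ) ≤ x := le_max_right _ _
  rcases le_or_gt q x with hq | hq
  · rw [Set.Ioc_eq_empty (not_lt.mpr hq), measure_empty,
      show ENNReal.ofReal (q ⊓ 1 - x) = 0 from ENNReal.ofReal_eq_zero.mpr (by
        have : q ⊓ 1 ≤ q := min_le_left _ _
        linarith), mul_zero]
  · have hsub : Set.Ioc x q = Set.Ioi x \ Set.Ioi q := (Set.Ioi_diff_Ioi).symm
    rw [hsub, measure_diff (Set.Ioi_subset_Ioi hq.le) measurableSet_Ioi.nullMeasurableSet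
      (measure_ne_top ν _), hνIoi x hx, hνIoi q (hx.trans hq.le)]
    have hmin : x ⊓ 1 ≤ q ⊓ 1 := min_le_min hq.le le_rfl
    rw [← ENNReal.ofReal_sub _ (by
      have h1 : q ⊓ 1 ≤ 1 := min_le_right _ _
      nlinarith [Real.pi_pos])]
    rcases le_or_gt x 1 with hx1 | hx1
    · rw [← ENNReal.ofReal_mul (by positivity)]
      congr 1
      rw [min_eq_left hx1]
      ring
    · have h1 : x ⊓ 1 = 1 := min_eq_right hx1.le
      have h2 : q ⊓ 1 ≤ x := (min_le_right _ _).trans hx1.le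
      rw [h1,
        show ENNReal.ofReal (2 * π * (1 - 1) - 2 * π * (1 - q ⊓ 1)) = 0 from
          ENNReal.ofReal_eq_zero.mpr (by
            have : q ⊓ 1 ≤ 1 := min_le_right _ _
            nlinarith [Real.pi_pos]),
        show ENNReal.ofReal (q ⊓ 1 - x) = 0 from ENNReal.ofReal_eq_zero.mpr (by linarith),
        mul_zero]

lemma zonal_lintegral {ξ : E3} (hξ : ‖ξ‖ = 1) (f : ℝ → ℝ≥0∞)
    (hf0 : ∀ s, s ≤ 1/2 → f s = 0)
    (hfm : AEMeasurable f (volume.restrict (Set.Ioc (1/2:ℝ) 1))) :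
    ∫⁻ η, f ⟪ξ, η⟫ ∂σS = ENNReal.ofReal (2*π) * ∫⁻ s in Set.Ioc (1/2:ℝ) 1, f s := by
  have hTm : Measurable fun η : E3 => (⟪ξ, η⟫ : ℝ) := (inner_cont ξ).measurable
  set ν := Measure.map (fun η : E3 => (⟪ξ, η⟫ : ℝ)) σS with hν
  have h2 : AEMeasurable f (ν.restrict (Set.Ioi (1/2:ℝ))) := by
    rw [hν, map_inner_restrict hξ]
    exact hfm.smul_measure _
  have h0 : ∀ᵐ s ∂ν.restrict (Set.Ioi (1/2:ℝ))ᶜ, f s = 0 := by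
    filter_upwards [ae_restrict_mem measurableSet_Ioi.compl] with s hs
    exact hf0 s (by simpa using hs)
  have h3 : AEMeasurable f (ν.restrict (Set.Ioi (1/2:ℝ))ᶜ) :=
    (aemeasurable_congr h0).mpr aemeasurable_const
  have hfν : AEMeasurable f ν := by
    rw [show ν = ν.restrict (Set.Ioi (1/2:ℝ)) + ν.restrict (Set.Ioi (1/2:ℝ))ᶜ from
      (Measure.restrict_add_restrict_compl measurableSet_Ioi).symm]
    exact aemeasurable_add_measure_iff.mpr ⟨h2, h3⟩
  calc ∫⁻ η, f ⟪ξ, η⟫ ∂σS = ∫⁻ s, f s ∂ν := (lintegral_map' hfν hTm.aemeasurable).symm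
    _ = ∫⁻ s in Set.Ioi (1/2:ℝ), f s ∂ν + ∫⁻ s in (Set.Ioi (1/2:ℝ))ᶜ, f s ∂ν :=
        (lintegral_add_compl _ measurableSet_Ioi).symm
    _ = ENNReal.ofReal (2*π) * ∫⁻ s in Set.Ioc (1/2:ℝ) 1, f s := by
        have hz : ∫⁻ s in (Set.Ioi (1/2:ℝ))ᶜ, f s ∂ν = 0 := (lintegral_eq_zero_iff' h3).mpr h0
        rw [hz, add_zero]
        have : ν.restrict (Set.Ioi (1/2:ℝ))
            = (ENNReal.ofReal (2 * π)) • (volume.restrict (Set.Ioc (1/2 : ℝ) 1)) := by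
          rw [hν]; exact map_inner_restrict hξ
        rw [this, lintegral_smul_measure, smul_eq_mul]


-- new material
lemma F_aesm (F : E3 → ℝ) (hF : ContinuousOn F sph) : AEStronglyMeasurable F σS := by
  rw [σS, (MeasurableEmbedding.subtype_coe
    Metric.isClosed_sphere.measurableSet).aestronglyMeasurable_map_iff]
  exact (ContinuousOn.restrict hF).aestronglyMeasurable

lemma inner_mem_Icc {ξ : E3} (hξ : ‖ξ‖ = 1) {η : E3} (hη : η ∈ Metric.sphere (0:E3) 1) :
    (⟪ξ, η⟫ : ℝ) ∈ Set.Icc (-1:ℝ) 1 := by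
  have h1 := abs_real_inner_le_norm ξ η
  rw [hξ, mem_sphere_zero_iff_norm.mp hη, one_mul] at h1
  exact abs_le.mp h1

lemma sreg_aesm (Rs : RegSingleC1) {ρ : ℝ} (hρ : ρ ∈ Set.Ioo (0:ℝ) 1) {ξ : E3} (hξ : ‖ξ‖ = 1) :
    AEStronglyMeasurable (fun η : E3 => SregK Rs ρ ⟪ξ, η⟫) σS := by
  rw [σS, (MeasurableEmbedding.subtype_coe
    Metric.isClosed_sphere.measurableSet).aestronglyMeasurable_map_iff]
  have hT : Continuous fun η : Metric.sphere (0:E3) 1 => (⟪ξ, (η:E3)⟫ : ℝ) :=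
    (inner_cont ξ).comp continuous_subtype_val
  have hcontR : Continuous fun η : Metric.sphere (0:E3) 1 => Rs.R ρ ⟪ξ, (η:E3)⟫ :=
    ContinuousOn.comp_continuous ((Rs.smooth ρ hρ).continuousOn) hT
      (fun η => inner_mem_Icc hξ η.2)
  have hmeas : Measurable ((fun η : E3 => SregK Rs ρ ⟪ξ, η⟫) ∘
      (Subtype.val : Metric.sphere (0:E3) 1 → E3)) := by
    have heq : ((fun η : E3 => SregK Rs ρ ⟪ξ, η⟫) ∘
        (Subtype.val : Metric.sphere (0:E3) 1 → E3))
        = Set.piecewise {η : Metric.sphere (0:E3) 1 | (⟪ξ, (η:E3)⟫:ℝ) ≤ 1 - ρ}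
            (fun η => singleS ⟪ξ, (η:E3)⟫) (fun η => Rs.R ρ ⟪ξ, (η:E3)⟫) := by
      ext η
      by_cases h : (⟪ξ, (η:E3)⟫:ℝ) ≤ 1 - ρ <;>
        simp [SregK, Set.piecewise, h, Function.comp]
    rw [heq]
    exact Measurable.piecewise (measurableSet_le hT.measurable measurable_const)
      (measurable_singleS.comp hT.measurable) hcontR.measurable
  exact hmeas.aestronglyMeasurable

lemma sreg_aemeasurable (Rs : RegSingleC1) {ρ : ℝ} (hρ : ρ ∈ Set.Ioo (0:ℝ) 1) :
    AEMeasurable (SregK Rs ρ) (volume.restrict (Set.Ioc (1/2:ℝ) 1)) := by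
  have hR : AEMeasurable (Rs.R ρ) (volume.restrict (Set.Ioc (1/2:ℝ) 1)) := by
    have h1 := ((Rs.smooth ρ hρ).continuousOn).aemeasurable (μ := volume)
      (measurableSet_Icc : MeasurableSet (Set.Icc (-1:ℝ) 1))
    refine h1.mono_measure (Measure.restrict_mono (fun t ht => ?_) le_rfl)
    rcases Set.mem_Ioc.mp ht with ⟨ht1, ht2⟩
    exact Set.mem_Icc.mpr ⟨by linarith, ht2⟩
  obtain ⟨R', hR'm, hR'e⟩ := hR
  have hm : Measurable fun t => if t ≤ 1 - ρ then singleS t else R' t :=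
    Measurable.ite measurableSet_Iic measurable_singleS hR'm
  refine hm.aemeasurable.congr ?_
  filter_upwards [hR'e] with t ht
  unfold SregK
  split <;> simp [ht]

lemma kern_integrable {K : ℝ → ℝ} {ξ : E3} (hξ : ‖ξ‖ = 1)
    (hsm : AEStronglyMeasurable (fun η : E3 => K ⟪ξ, η⟫) σS)
    (hb : ∀ t ∈ Set.Icc (-1:ℝ) 1, t ≤ 1/2 → |K t| ≤ 1)
    (hfin : ∫⁻ s in Set.Ioc (1/2:ℝ) 1, ENNReal.ofReal |K s| ≠ ⊤)
    (hKm : AEMeasurable K (volume.restrict (Set.Ioc (1/2:ℝ) 1)))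
    {F : E3 → ℝ} (hFsm : AEStronglyMeasurable F σS) {M : ℝ}
    (hM : ∀ x ∈ Metric.sphere (0:E3) 1, |F x| ≤ M) :
    Integrable (fun η => K ⟪ξ, η⟫ * F η) σS := by
  refine ⟨hsm.mul hFsm, ?_⟩
  rw [hasFiniteIntegral_iff_norm]
  set M' := max M 0 with hM'
  set g : ℝ → ℝ≥0∞ := Set.indicator (Set.Ioi (1/2:ℝ)) (fun s => ENNReal.ofReal |K s|) with hg
  have hgm : AEMeasurable g (volume.restrict (Set.Ioc (1/2:ℝ) 1)) :=
    AEMeasurable.indicator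
      (by exact (ENNReal.measurable_ofReal.comp measurable_abs).comp_aemeasurable hKm)
      measurableSet_Ioi
  have hbound : ∀ᵐ η ∂σS,
      ENNReal.ofReal ‖K ⟪ξ,η⟫ * F η‖ ≤ (1 + g ⟪ξ,η⟫) * ENNReal.ofReal M' := by
    filter_upwards [ae_sph] with η hη
    have ht := inner_mem_Icc hξ hη
    have hF' : |F η| ≤ M' := le_trans (hM η hη) (le_max_left _ _)
    have h2 : ENNReal.ofReal ‖K ⟪ξ,η⟫ * F η‖
        ≤ ENNReal.ofReal |K ⟪ξ,η⟫| * ENNReal.ofReal M' := by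
      rw [Real.norm_eq_abs, abs_mul, ENNReal.ofReal_mul (abs_nonneg _)]
      exact mul_le_mul_right (ENNReal.ofReal_le_ofReal hF') _
    refine h2.trans (mul_le_mul_left ?_ _)
    rcases le_or_gt (⟪ξ,η⟫:ℝ) (1/2) with h | h
    · calc ENNReal.ofReal |K ⟪ξ,η⟫| ≤ ENNReal.ofReal 1 :=
            ENNReal.ofReal_le_ofReal (hb _ ht h)
        _ = 1 := ENNReal.ofReal_one
        _ ≤ 1 + g ⟪ξ,η⟫ := le_self_add
    · rw [hg, Set.indicator_of_mem (show (⟪ξ,η⟫:ℝ) ∈ Set.Ioi (1/2:ℝ) from h)]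
      exact le_add_self
  calc ∫⁻ η, ENNReal.ofReal ‖K ⟪ξ,η⟫ * F η‖ ∂σS
      ≤ ∫⁻ η, (1 + g ⟪ξ,η⟫) * ENNReal.ofReal M' ∂σS := lintegral_mono_ae hbound
    _ = (∫⁻ η, (1 + g ⟪ξ,η⟫) ∂σS) * ENNReal.ofReal M' :=
        lintegral_mul_const' _ _ ENNReal.ofReal_ne_top
    _ < ⊤ := by
        apply ENNReal.mul_lt_top _ ENNReal.ofReal_lt_top
        have hz := zonal_lintegral hξ g
          (fun s hs => Set.indicator_of_notMem (by simpa using hs) _) hgm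
        rw [lintegral_add_left measurable_const, lintegral_const, hz]
        refine ENNReal.add_lt_top.mpr ⟨ENNReal.mul_lt_top ENNReal.one_lt_top
          (measure_lt_top σS _), ENNReal.mul_lt_top ENNReal.ofReal_lt_top ?_⟩
        have hcongr : ∫⁻ s in Set.Ioc (1/2:ℝ) 1, g s
            = ∫⁻ s in Set.Ioc (1/2:ℝ) 1, ENNReal.ofReal |K s| := by
          refine setLIntegral_congr_fun measurableSet_Ioc (fun s hs => ?_)
          rw [hg, Set.indicator_of_mem (show s ∈ Set.Ioi (1/2:ℝ) from hs.1)]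
        rw [hcongr]
        exact lt_top_iff_ne_top.mpr hfin


-- main bound
lemma singleS_fin : ∫⁻ s in Set.Ioc (1/2:ℝ) 1, ENNReal.ofReal |singleS s| ≠ ⊤ := by
  have h1 : ∫⁻ s in Set.Ioc (1/2:ℝ) 1, ENNReal.ofReal |singleS s|
      = ∫⁻ s in Set.Ioc (1/2:ℝ) 1, ENNReal.ofReal (singleS s) := by
    apply lintegral_congr fun s => by rw [abs_of_nonneg (singleS_nonneg s)]
  rw [h1, show (1/2:ℝ) = 1 - 1/2 by norm_num, singleS_lint (by norm_num)]
  exact ENNReal.ofReal_ne_top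

lemma R_bound_fin (Rs : RegSingleC1) {ρ : ℝ} (hρ : ρ ∈ Set.Ioo (0:ℝ) 1) :
    ∃ C : ℝ, 0 ≤ C ∧ ∀ t ∈ Set.Icc (-1:ℝ) 1, |Rs.R ρ t| ≤ C := by
  obtain ⟨C, hC⟩ := (isCompact_Icc (a := (-1:ℝ)) (b := 1)).exists_bound_of_continuousOn
    (Rs.smooth ρ hρ).continuousOn
  exact ⟨max C 0, le_max_right _ _,
    fun t ht => le_trans (by simpa using hC t ht) (le_max_left _ _)⟩

lemma sreg_fin (Rs : RegSingleC1) {ρ : ℝ} (hρ0 : 0 < ρ) (hρ2 : ρ < 1/2) :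
    ∫⁻ s in Set.Ioc (1/2:ℝ) 1, ENNReal.ofReal |SregK Rs ρ s| ≠ ⊤ := by
  have hρ : ρ ∈ Set.Ioo (0:ℝ) 1 := ⟨hρ0, by linarith⟩
  obtain ⟨C, hC0, hC⟩ := R_bound_fin Rs hρ
  have hb : ∀ᵐ s ∂(volume.restrict (Set.Ioc (1/2:ℝ) 1)),
      ENNReal.ofReal |SregK Rs ρ s| ≤ ENNReal.ofReal (singleS s) + ENNReal.ofReal C := by
    filter_upwards [ae_restrict_mem measurableSet_Ioc] with s hs
    unfold SregK
    split
    · rw [abs_of_nonneg (singleS_nonneg s)]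
      exact le_add_right le_rfl
    · refine le_add_left (ENNReal.ofReal_le_ofReal (hC s ⟨by linarith [hs.1], hs.2⟩))
  refine ne_top_of_le_ne_top ?_ (lintegral_mono_ae hb)
  rw [lintegral_add_right _ measurable_const]
  refine ENNReal.add_ne_top.mpr ⟨?_, ?_⟩
  · rw [show (1/2:ℝ) = 1 - 1/2 by norm_num, singleS_lint (by norm_num)]
    exact ENNReal.ofReal_ne_top
  · rw [lintegral_const, Measure.restrict_apply MeasurableSet.univ, Set.univ_inter,
      Real.volume_Ioc]
    exact ENNReal.mul_ne_top ENNReal.ofReal_ne_top ENNReal.ofReal_ne_top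

lemma main_bound (Rs : RegSingleC1) {F : E3 → ℝ} (hF : ContinuousOn F sph)
    {M : ℝ} (hM : ∀ x ∈ Metric.sphere (0:E3) 1, |F x| ≤ M)
    {ρ : ℝ} (hρ0 : 0 < ρ) (hρ2 : ρ < 1/2) {ξ : E3} (hξ : ‖ξ‖ = 1) :
    |(∫ η, SregK Rs ρ ⟪ξ, η⟫ * F η ∂σS) - ∫ η, singleS ⟪ξ, η⟫ * F η ∂σS|
      ≤ 2 * π * (max M 0) *
        ((∫ t in (1-ρ)..(1:ℝ), |Rs.R ρ t|) + Real.sqrt 2 * Real.sqrt ρ) := by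
  have hρ : ρ ∈ Set.Ioo (0:ℝ) 1 := ⟨hρ0, by linarith⟩
  set M' := max M 0 with hM'
  have hM'b : ∀ x ∈ Metric.sphere (0:E3) 1, |F x| ≤ M' :=
    fun x hx => le_trans (hM x hx) (le_max_left _ _)
  have hFsm := F_aesm F hF
  have hb2 : ∀ t ∈ Set.Icc (-1:ℝ) 1, t ≤ 1/2 → |singleS t| ≤ 1 := by
    intro t _ h
    rw [abs_of_nonneg (singleS_nonneg t)]
    exact singleS_le_one h
  have hint2 : Integrable (fun η => singleS ⟪ξ, η⟫ * F η) σS :=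
    kern_integrable hξ
      (measurable_singleS.comp (inner_cont ξ).measurable).aestronglyMeasurable
      hb2 singleS_fin measurable_singleS.aemeasurable hFsm hM'b
  have hint1 : Integrable (fun η => SregK Rs ρ ⟪ξ, η⟫ * F η) σS := by
    refine kern_integrable hξ (sreg_aesm Rs hρ hξ) ?_ (sreg_fin Rs hρ0 hρ2)
      (sreg_aemeasurable Rs hρ) hFsm hM'b
    intro t ht h
    rw [SregK, if_pos (by linarith)]
    exact hb2 t ht h
  rw [← integral_sub hint1 hint2]
  -- kernel difference as indicator
  set d : ℝ → ℝ≥0∞ :=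
    Set.indicator (Set.Ioi (1-ρ)) (fun s => ENNReal.ofReal |Rs.R ρ s - singleS s|) with hd
  set I₁ : ℝ := ∫ t in (1-ρ)..(1:ℝ), |Rs.R ρ t| with hI₁
  set I₂ : ℝ := Real.sqrt 2 * Real.sqrt ρ with hI₂
  have hI₁nn : 0 ≤ I₁ :=
    intervalIntegral.integral_nonneg (by linarith) (fun u _ => abs_nonneg _)
  have hI₂nn : 0 ≤ I₂ := by rw [hI₂]; positivity
  -- pointwise lintegral bound
  have hbound : ∀ᵐ η ∂σS, ENNReal.ofReal ‖SregK Rs ρ ⟪ξ,η⟫ * F η - singleS ⟪ξ,η⟫ * F η‖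
      ≤ d ⟪ξ,η⟫ * ENNReal.ofReal M' := by
    filter_upwards [ae_sph] with η hη
    rcases le_or_gt (⟪ξ,η⟫:ℝ) (1-ρ) with h | h
    · rw [show SregK Rs ρ ⟪ξ,η⟫ = singleS ⟪ξ,η⟫ from if_pos h]
      simp
    · rw [show SregK Rs ρ ⟪ξ,η⟫ = Rs.R ρ ⟪ξ,η⟫ from if_neg (not_le.mpr h),
        hd, Set.indicator_of_mem (show (⟪ξ,η⟫:ℝ) ∈ Set.Ioi (1-ρ) from h),
        ← sub_mul, Real.norm_eq_abs, abs_mul, ENNReal.ofReal_mul (abs_nonneg _)]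
      exact mul_le_mul_right (ENNReal.ofReal_le_ofReal (hM'b η hη)) _
  -- lintegral of d
  have hRae : AEMeasurable (Rs.R ρ) (volume.restrict (Set.Ioc (1/2:ℝ) 1)) := by
    have h1 := ((Rs.smooth ρ hρ).continuousOn).aemeasurable (μ := volume)
      (measurableSet_Icc : MeasurableSet (Set.Icc (-1:ℝ) 1))
    refine h1.mono_measure (Measure.restrict_mono (fun t ht => ?_) le_rfl)
    rcases Set.mem_Ioc.mp ht with ⟨ht1, ht2⟩
    exact Set.mem_Icc.mpr ⟨by linarith, ht2⟩
  have hdm : AEMeasurable d (volume.restrict (Set.Ioc (1/2:ℝ) 1)) := by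
    refine AEMeasurable.indicator ?_ measurableSet_Ioi
    exact (ENNReal.measurable_ofReal.comp measurable_abs).comp_aemeasurable
      (hRae.sub measurable_singleS.aemeasurable)
  have hd0 : ∀ s : ℝ, s ≤ 1/2 → d s = 0 := fun s hs =>
    Set.indicator_of_notMem (by simp only [Set.mem_Ioi, not_lt]; linarith) _
  have hzon := zonal_lintegral hξ d hd0 hdm
  -- compute/bound ∫⁻ d over Ioc (1/2) 1
  have hsplit : ∫⁻ s in Set.Ioc (1/2:ℝ) 1, d s
      = (∫⁻ s in Set.Ioc (1/2:ℝ) (1-ρ), d s) + ∫⁻ s in Set.Ioc (1-ρ) 1, d s := by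
    rw [show Set.Ioc (1/2:ℝ) 1 = Set.Ioc (1/2:ℝ) (1-ρ) ∪ Set.Ioc (1-ρ) 1 from
      (Set.Ioc_union_Ioc_eq_Ioc (by linarith) (by linarith)).symm,
      lintegral_union measurableSet_Ioc (Set.Ioc_disjoint_Ioc_of_le le_rfl)]
  have hz1 : ∫⁻ s in Set.Ioc (1/2:ℝ) (1-ρ), d s = 0 := by
    rw [setLIntegral_congr_fun measurableSet_Ioc
      (fun s hs => Set.indicator_of_notMem
        (by simp only [Set.mem_Ioi, not_lt]; exact hs.2) _), lintegral_zero]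
  have hz2 : ∫⁻ s in Set.Ioc (1-ρ) 1, d s ≤ ENNReal.ofReal I₁ + ENNReal.ofReal I₂ := by
    have hb3 : ∀ᵐ s ∂(volume.restrict (Set.Ioc (1-ρ) 1)),
        d s ≤ ENNReal.ofReal |Rs.R ρ s| + ENNReal.ofReal (singleS s) := by
      filter_upwards [ae_restrict_mem measurableSet_Ioc] with s hs
      rw [hd]
      rcases le_or_gt s (1-ρ) with h | h
      · rw [Set.indicator_of_notMem (by simp only [Set.mem_Ioi, not_lt]; exact h) _]
        exact zero_le
      · rw [Set.indicator_of_mem (show s ∈ Set.Ioi (1-ρ) from h)]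
        rw [← ENNReal.ofReal_add (abs_nonneg _) (singleS_nonneg s)]
        apply ENNReal.ofReal_le_ofReal
        calc |Rs.R ρ s - singleS s| ≤ |Rs.R ρ s| + |singleS s| := abs_sub _ _
          _ = |Rs.R ρ s| + singleS s := by rw [abs_of_nonneg (singleS_nonneg s)]
    refine le_trans (lintegral_mono_ae hb3) ?_
    have hRae2 : AEMeasurable (fun s => ENNReal.ofReal |Rs.R ρ s|)
        (volume.restrict (Set.Ioc (1-ρ) 1)) := by
      refine ((ENNReal.measurable_ofReal.comp measurable_abs).comp_aemeasurable
        (hRae.mono_measure (Measure.restrict_mono (fun t ht => ?_) le_rfl)))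
      rcases Set.mem_Ioc.mp ht with ⟨ht1, ht2⟩
      exact Set.mem_Ioc.mpr ⟨by linarith, ht2⟩
    rw [lintegral_add_left' hRae2]
    have hR_int : IntegrableOn (fun s => |Rs.R ρ s|) (Set.Ioc (1-ρ) 1) := by
      refine (((Rs.smooth ρ hρ).continuousOn.mono (fun t ht => ?_)).abs.integrableOn_compact
        isCompact_Icc).mono_set Set.Ioc_subset_Icc_self
      exact ⟨by linarith [ht.1], ht.2⟩
    have hRv : ∫⁻ s in Set.Ioc (1-ρ) 1, ENNReal.ofReal |Rs.R ρ s| = ENNReal.ofReal I₁ := by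
      rw [← ofReal_integral_eq_lintegral_ofReal hR_int
        (ae_of_all _ fun s => abs_nonneg _), hI₁,
        intervalIntegral.integral_of_le (by linarith : 1-ρ ≤ 1)]
    rw [hRv, singleS_lint hρ0.le]
  -- assemble
  have hLHS := norm_integral_le_lintegral_norm
    (μ := σS) (f := fun η => SregK Rs ρ ⟪ξ,η⟫ * F η - singleS ⟪ξ,η⟫ * F η)
  rw [Real.norm_eq_abs] at hLHS
  refine hLHS.trans ?_
  have hup : ∫⁻ η, ENNReal.ofReal ‖SregK Rs ρ ⟪ξ,η⟫ * F η - singleS ⟪ξ,η⟫ * F η‖ ∂σS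
      ≤ ENNReal.ofReal (2*π) * (ENNReal.ofReal I₁ + ENNReal.ofReal I₂) * ENNReal.ofReal M' := by
    calc ∫⁻ η, ENNReal.ofReal ‖SregK Rs ρ ⟪ξ,η⟫ * F η - singleS ⟪ξ,η⟫ * F η‖ ∂σS
        ≤ ∫⁻ η, d ⟪ξ,η⟫ * ENNReal.ofReal M' ∂σS := lintegral_mono_ae hbound
      _ = (∫⁻ η, d ⟪ξ,η⟫ ∂σS) * ENNReal.ofReal M' :=
          lintegral_mul_const' _ _ ENNReal.ofReal_ne_top
      _ ≤ ENNReal.ofReal (2*π) * (ENNReal.ofReal I₁ + ENNReal.ofReal I₂) * ENNReal.ofReal M' := by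
          refine mul_le_mul_left ?_ _
          rw [hzon]
          refine mul_le_mul_right ?_ _
          exact le_trans (le_of_eq hsplit)
            (le_trans (add_le_add (le_of_eq hz1) hz2) (le_of_eq (zero_add _)))
  calc (∫⁻ η, ENNReal.ofReal ‖SregK Rs ρ ⟪ξ,η⟫ * F η - singleS ⟪ξ,η⟫ * F η‖ ∂σS).toReal
      ≤ (ENNReal.ofReal (2*π) * (ENNReal.ofReal I₁ + ENNReal.ofReal I₂)
          * ENNReal.ofReal M').toReal := by
        apply ENNReal.toReal_mono _ hup
        exact ENNReal.mul_ne_top (ENNReal.mul_ne_top ENNReal.ofReal_ne_top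
          (ENNReal.add_ne_top.mpr ⟨ENNReal.ofReal_ne_top, ENNReal.ofReal_ne_top⟩))
          ENNReal.ofReal_ne_top
    _ = 2 * π * M' * (I₁ + I₂) := by
        rw [← ENNReal.ofReal_add hI₁nn hI₂nn, ← ENNReal.ofReal_mul (by positivity),
          ← ENNReal.ofReal_mul (by positivity), ENNReal.toReal_ofReal (by positivity)]
        ring
    _ = 2 * π * M' * (I₁ + I₂) := rfl


/-- For a C¹-regularized single layer kernel and continuous F : Ω → ℝ,
lim_{ρ→0+} sup_{ξ∈Ω} |∫_Ω S^ρ(ξ·η)F(η) dω(η) − ∫_Ω S(ξ·η)F(η) dω(η)| = 0. -/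
theorem reg_single_layer_uniform_convergence (Rs : RegSingleC1) (F : E3 → ℝ)
    (hF : ContinuousOn F sph) :
    TendstoUniformly
      (fun ρ (ξ : sph) => ∫ η, SregK Rs ρ ⟪(ξ : E3), η⟫ * F η ∂σS)
      (fun ξ : sph => ∫ η, singleS ⟪(ξ : E3), η⟫ * F η ∂σS)
      (nhdsWithin 0 (Set.Ioi 0)) := by
  obtain ⟨M, hM⟩ := (isCompact_sphere (0:E3) 1).exists_bound_of_continuousOn hF
  have hM' : ∀ x ∈ Metric.sphere (0:E3) 1, |F x| ≤ M := fun x hx => by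
    simpa using hM x hx
  rw [Metric.tendstoUniformly_iff]
  intro ε hε
  set B : ℝ → ℝ := fun ρ => 2 * π * (max M 0) *
    ((∫ t in (1-ρ)..(1:ℝ), |Rs.R ρ t|) + Real.sqrt 2 * Real.sqrt ρ) with hB
  have hBlim : Tendsto B (nhdsWithin 0 (Set.Ioi 0)) (nhds 0) := by
    have h1 : Tendsto (fun ρ : ℝ => Real.sqrt 2 * Real.sqrt ρ)
        (nhdsWithin 0 (Set.Ioi 0)) (nhds 0) := by
      have h2 : Tendsto (fun ρ : ℝ => Real.sqrt 2 * Real.sqrt ρ) (nhds 0)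
          (nhds (Real.sqrt 2 * Real.sqrt 0)) :=
        (continuous_const.mul Real.continuous_sqrt).tendsto 0
      rw [Real.sqrt_zero, mul_zero] at h2
      exact h2.mono_left nhdsWithin_le_nhds
    have h3 := (Rs.lim0.add h1).const_mul (2 * π * (max M 0))
    rw [add_zero, mul_zero] at h3
    exact h3
  have hev2 : ∀ᶠ ρ : ℝ in nhdsWithin 0 (Set.Ioi 0), ρ < 1/2 :=
    eventually_nhdsWithin_of_eventually_nhds
      (Filter.Tendsto.eventually_lt_const (by norm_num) tendsto_id)
  filter_upwards [Metric.tendsto_nhds.mp hBlim ε hε, hev2, eventually_mem_nhdsWithin]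
    with ρ h1 h2 h3
  intro ξ
  have hξ : ‖(ξ:E3)‖ = 1 := mem_sphere_zero_iff_norm.mp ξ.2
  rw [Real.dist_eq, abs_sub_comm]
  have hb := main_bound Rs hF hM' (Set.mem_Ioi.mp h3) h2 hξ
  refine lt_of_le_of_lt hb ?_
  rw [Real.dist_eq, sub_zero] at h1
  exact lt_of_le_of_lt (le_abs_self _) h1

end
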